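/- arXiv:1511.01372 — 2 statements merged into one kernel-verified Lean document; each statement's English description precedes it below -/
import Mathlib

section
/- If C is a set of cycles of a connected graph G such that the tree graph T(G,C) is connected, then C cyclically spans the cycle space of G. -/
open SimpleGraph Finset
open scoped symmDiff


variable {V : Type} [DecidableEq V]

/-- Degree of a vertex in an edge set. -/
def edeg (s : Finset (Sym2 V)) (v : V) : ℕ := (s.filter (fun e => v ∈ e)).card

lemma perm_toFinset {α} [DecidableEq α] {l l' : List α} (h : l.Perm l') :
    l.toFinset = l'.toFinset := by
  ext a; simp [h.mem_iff]

lemma card_symmDiff_even {α} [DecidableEq α] {s t : Finset α}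
    (hs : Even s.card) (ht : Even t.card) : Even ((s ∆ t).card) := by
  have h1 : (s ∆ t) = (s ∪ t) \ (s ∩ t) := by
    ext a; simp [Finset.mem_symmDiff]; tauto
  have h2 : (s ∩ t) ⊆ (s ∪ t) := (Finset.inter_subset_left).trans Finset.subset_union_left
  have h3 : ((s ∪ t) \ (s ∩ t)).card + (s ∩ t).card = (s ∪ t).card :=
    Finset.card_sdiff_add_card_eq_card h2
  have h4 := Finset.card_union_add_card_inter s t
  obtain ⟨a, ha⟩ := hs; obtain ⟨b, hb⟩ := ht
  rw [h1]
  have : ((s ∪ t) \ (s ∩ t)).card = a + a + (b + b) - 2 * (s ∩ t).card := by omega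
  rw [this]
  refine ⟨a + b - (s ∩ t).card, by omega⟩

lemma filter_symmDiff {α} [DecidableEq α] (p : α → Prop) [DecidablePred p] (s t : Finset α) :
    (s ∆ t).filter p = (s.filter p) ∆ (t.filter p) := by
  ext a; simp [Finset.mem_symmDiff]; tauto

lemma even_edeg_symmDiff {s t : Finset (Sym2 V)} {v : V}
    (hs : Even (edeg s v)) (ht : Even (edeg t v)) : Even (edeg (s ∆ t) v) := by
  unfold edeg at *
  rw [filter_symmDiff]
  exact card_symmDiff_even hs ht

lemma cycle_even_edeg {G : SimpleGraph V} {u : V} {w : G.Walk u u} (hw : w.IsCycle) (v : V) :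
    Even (edeg w.edges.toFinset v) := by
  have hco := (hw.isTrail.even_countP_edges_iff v).mpr (fun h => absurd rfl h)
  have hnd : w.edges.Nodup := hw.isTrail.edges_nodup
  unfold edeg
  have h1 : w.edges.toFinset.filter (fun e => v ∈ e) = (w.edges.filter (fun e => v ∈ e)).toFinset := by
    rw [List.toFinset_filter]; simp
  rw [h1, List.toFinset_card_of_nodup (hnd.filter _), ← List.countP_eq_length_filter]
  simpa using hco

lemma symmDiff_toFinset_mem {s t : Finset (Sym2 V)} {f : Sym2 V} (hf : f ∈ s ∆ t) :
    f ∈ s ∨ f ∈ t := by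
  rw [Finset.mem_symmDiff] at hf; tauto
variable {V : Type} [DecidableEq V]


/-- From an even degree and one incident edge `s(u,b)`, get a second neighbor. -/
lemma exists_second_neighbor {s : Finset (Sym2 V)} (hd : ∀ f ∈ s, ¬f.IsDiag) {u b : V}
    (hub : s(u, b) ∈ s) (he : Even (edeg s u)) :
    ∃ c, s(u, c) ∈ s ∧ c ≠ b ∧ c ≠ u := by
  by_cases hsub : s.filter (fun e => u ∈ e) ⊆ {s(u, b)}
  · have h1 : s.filter (fun e => u ∈ e) = {s(u, b)} := by
      apply Finset.Subset.antisymm hsub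
      intro f hf
      rw [Finset.mem_singleton] at hf
      subst hf
      exact Finset.mem_filter.mpr ⟨hub, Sym2.mem_mk_left u b⟩
    rw [edeg, h1] at he
    simp at he
  · rw [Finset.not_subset] at hsub
    obtain ⟨f, hf, hfne⟩ := hsub
    rw [Finset.mem_filter] at hf
    rw [Finset.mem_singleton] at hfne
    obtain ⟨c, rfl⟩ := Sym2.mem_iff_exists.mp hf.2
    refine ⟨c, hf.1, ?_, ?_⟩
    · rintro rfl; exact hfne rfl
    · intro h; exact hd _ hf.1 (by rw [h]; exact Sym2.mk_isDiag_iff.mpr rfl)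

/-- A nonempty edge set with all degrees even contains a cycle (in its graph). -/
lemma exists_cycle_of_even [Fintype V] {s : Finset (Sym2 V)} (hne : s ≠ ∅)
    (hd : ∀ f ∈ s, ¬f.IsDiag) (he : ∀ v, Even (edeg s v)) :
    ∃ (u : V) (w : (SimpleGraph.fromEdgeSet (↑s : Set (Sym2 V))).Walk u u), w.IsCycle := by
  classical
  set H := SimpleGraph.fromEdgeSet (↑s : Set (Sym2 V)) with hH
  have hadj : ∀ a b : V, s(a, b) ∈ s → H.Adj a b := by
    intro a b hab
    rw [hH, SimpleGraph.fromEdgeSet_adj]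
    exact ⟨hab, fun h => hd _ hab (by rw [h]; exact Sym2.mk_isDiag_iff.mpr rfl)⟩
  have hadj' : ∀ a b : V, H.Adj a b → s(a, b) ∈ s := by
    intro a b hab; rw [hH, SimpleGraph.fromEdgeSet_adj] at hab; exact hab.1
  -- a path of length 1
  obtain ⟨f, hf⟩ := Finset.nonempty_iff_ne_empty.mpr hne
  induction f using Sym2.ind with
  | _ a b =>
  have hAab : H.Adj a b := hadj a b hf
  set P : ℕ → Prop := fun n => ∃ (x y : V) (w : H.Walk x y), w.IsPath ∧ w.length = n with hP
  have hP1 : P 1 := by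
    refine ⟨a, b, SimpleGraph.Walk.cons hAab SimpleGraph.Walk.nil, ?_, rfl⟩
    rw [SimpleGraph.Walk.cons_isPath_iff]
    simp [hAab.ne]
  have hcard : 1 ≤ Fintype.card V := Fintype.card_pos_iff.mpr ⟨a⟩
  set n := Nat.findGreatest P (Fintype.card V) with hn
  have hn1 : 1 ≤ n := Nat.le_findGreatest hcard hP1
  have hPn : P n := Nat.findGreatest_spec hcard hP1
  have hmax : ¬ P (n + 1) := by
    by_cases hle : n + 1 ≤ Fintype.card V
    · exact Nat.findGreatest_is_greatest (by omega) hle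
    · rintro ⟨x, y, w, hw, hl⟩
      have := hw.length_lt
      omega
  obtain ⟨x, y, w, hw, hl⟩ := hPn
  cases w with
  | nil => simp at hl; omega
  | cons hxb' q =>
    rename_i b'
    -- hxb' : H.Adj x b', q : H.Walk b' y
    obtain ⟨c, hc, hcb, hcx⟩ := exists_second_neighbor hd (hadj' _ _ hxb') (he x)
    have hAxc : H.Adj x c := hadj x c hc
    by_cases hcs : c ∈ (SimpleGraph.Walk.cons hxb' q).support
    · -- cycle via takeUntil
      set p' := (SimpleGraph.Walk.cons hxb' q).takeUntil c hcs with hp'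
      have hp'path : p'.IsPath := hw.takeUntil hcs
      refine ⟨c, SimpleGraph.Walk.cons hAxc.symm p', ?_⟩
      rw [SimpleGraph.Walk.cons_isCycle_iff]
      refine ⟨hp'path, ?_⟩
      intro hmem
      have hsub := SimpleGraph.Walk.edges_takeUntil_subset (SimpleGraph.Walk.cons hxb' q) hcs
      have hmem' : s(c, x) ∈ (SimpleGraph.Walk.cons hxb' q).edges := hsub hmem
      rw [SimpleGraph.Walk.edges_cons] at hmem'
      rcases List.mem_cons.mp hmem' with h1 | h2
      · rw [Sym2.eq_iff] at h1
        rcases h1 with ⟨h3, h4⟩ | ⟨h3, h4⟩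
        · exact hcx h3
        · exact hcb h3
      · have : x ∈ q.support := SimpleGraph.Walk.snd_mem_support_of_mem_edges q h2
        rw [SimpleGraph.Walk.cons_isPath_iff] at hw
        exact hw.2 this
    · -- extend the path
      apply absurd hmax
      push_neg
      refine ⟨c, y, SimpleGraph.Walk.cons hAxc.symm (SimpleGraph.Walk.cons hxb' q), ?_, by simp [hl]⟩
      rw [SimpleGraph.Walk.cons_isPath_iff]
      exact ⟨hw, hcs⟩
variable {V : Type} [DecidableEq V] [Fintype V]

/-- An even-degree edge set inside an acyclic graph is empty. -/
lemma even_subset_acyclic_empty {A : SimpleGraph V} (hA : A.IsAcyclic)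
    {s : Finset (Sym2 V)} (hsub : ∀ f ∈ s, f ∈ A.edgeSet)
    (he : ∀ v, Even (edeg s v)) : s = ∅ := by
  by_contra hne
  have hd : ∀ f ∈ s, ¬f.IsDiag := fun f hf => A.not_isDiag_of_mem_edgeSet (hsub f hf)
  obtain ⟨u, w, hw⟩ := exists_cycle_of_even hne hd he
  have hle : ∀ e ∈ w.edges, e ∈ A.edgeSet := by
    intro e hee
    have := SimpleGraph.Walk.edges_subset_edgeSet w hee
    rw [SimpleGraph.edgeSet_fromEdgeSet] at this
    exact hsub e (by exact_mod_cast this.1)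
  exact hA (w.transfer A hle) (hw.transfer hle)

/-- Nonempty even-degree edge subsets of (acyclic graph + one extra edge) are unique. -/
lemma even_subset_acyclic_plus_unique {A : SimpleGraph V} (hA : A.IsAcyclic) (g : Sym2 V)
    {s t : Finset (Sym2 V)}
    (hs : ∀ f ∈ s, f ∈ A.edgeSet ∨ f = g) (ht : ∀ f ∈ t, f ∈ A.edgeSet ∨ f = g)
    (hse : ∀ v, Even (edeg s v)) (hte : ∀ v, Even (edeg t v))
    (hsne : s ≠ ∅) (htne : t ≠ ∅) : s = t := by
  have hgs : g ∈ s := by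
    by_contra hg
    exact hsne (even_subset_acyclic_empty hA
      (fun f hf => (hs f hf).resolve_right (fun h => hg (h ▸ hf))) hse)
  have hgt : g ∈ t := by
    by_contra hg
    exact htne (even_subset_acyclic_empty hA
      (fun f hf => (ht f hf).resolve_right (fun h => hg (h ▸ hf))) hte)
  have hD : s ∆ t = ∅ := by
    apply even_subset_acyclic_empty hA
    · intro f hf
      have hfg : f ≠ g := by
        rintro rfl
        rw [Finset.mem_symmDiff] at hf
        tauto
      rw [Finset.mem_symmDiff] at hf
      rcases hf with ⟨hf, _⟩ | ⟨hf, _⟩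
      · exact (hs f hf).resolve_right hfg
      · exact (ht f hf).resolve_right hfg
    · intro v; exact even_edeg_symmDiff (hse v) (hte v)
  have := symmDiff_eq_bot.mp (by rw [← Finset.bot_eq_empty] at hD; exact hD)
  exact this
variable {V : Type} [DecidableEq V]

/-- In a path, an edge containing the initial vertex must be the first edge. -/
lemma path_first_edge {G : SimpleGraph V} {u v : V} (p : G.Walk u v) (hp : p.IsPath)
    {e : Sym2 V} (he : e ∈ p.edges) (hu : u ∈ e) :
    ∃ (z : V) (h : G.Adj u z) (q : G.Walk z v), p = SimpleGraph.Walk.cons h q ∧ e = s(u, z) := by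
  cases p with
  | nil => simp at he
  | cons h q =>
    rename_i z
    rw [SimpleGraph.Walk.edges_cons] at he
    rcases List.mem_cons.mp he with h1 | h2
    · exact ⟨z, h, q, rfl, h1⟩
    · exfalso
      obtain ⟨c, rfl⟩ := Sym2.mem_iff_exists.mp hu
      have : u ∈ q.support := SimpleGraph.Walk.fst_mem_support_of_mem_edges q h2
      rw [SimpleGraph.Walk.cons_isPath_iff] at hp
      exact hp.2 this

/-- Decomposition of a cycle at one of its edges: the rest is a path. -/
lemma cycle_edge_decomp {G : SimpleGraph V} {u : V} (w : G.Walk u u) (hw : w.IsCycle)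
    {e : Sym2 V} (he : e ∈ w.edges) :
    ∃ (x y : V) (p : G.Walk y x), p.IsPath ∧ e = s(x, y) ∧ e ∉ p.edges ∧
      w.edges.toFinset = insert e p.edges.toFinset := by
  induction e using Sym2.ind with
  | _ x y =>
  have hx : x ∈ w.support := SimpleGraph.Walk.fst_mem_support_of_mem_edges w he
  set w₂ := w.rotate x hx with hw₂def
  have hw₂ : w₂.IsCycle := hw.rotate hx
  have hperm : w₂.edges.Perm w.edges := (SimpleGraph.Walk.rotate_edges w x hx).perm
  have hetf : w₂.edges.toFinset = w.edges.toFinset := by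
    ext a; simp [hperm.mem_iff]
  have he₂ : s(x, y) ∈ w₂.edges := hperm.mem_iff.mpr he
  clear_value w₂
  cases w₂ with
  | nil => exact absurd rfl hw₂.ne_nil
  | cons hxz q =>
    rename_i z
    have hq : q.IsPath ∧ s(x, z) ∉ q.edges :=
      (SimpleGraph.Walk.cons_isCycle_iff q hxz).mp hw₂
    by_cases hez : s(x, y) = s(x, z)
    · have hyz : y = z := by
        rw [Sym2.eq_iff] at hez
        rcases hez with ⟨_, h⟩ | ⟨h1, _⟩
        · exact h
        · exact absurd h1 hxz.ne
      subst hyz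
      refine ⟨x, y, q, hq.1, rfl, hq.2, ?_⟩
      rw [← hetf, SimpleGraph.Walk.edges_cons, List.toFinset_cons]
    · have heq : s(x, y) ∈ q.edges := by
        rw [SimpleGraph.Walk.edges_cons] at he₂
        rcases List.mem_cons.mp he₂ with h1 | h2
        · exact absurd h1 hez
        · exact h2
      set r := q.reverse with hrdef
      have hrpath : r.IsPath := hq.1.reverse
      have her : s(x, y) ∈ r.edges := by
        rw [hrdef, SimpleGraph.Walk.edges_reverse, List.mem_reverse]; exact heq
      obtain ⟨y', hxy', r', hr_eq, he_eq⟩ :=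
        path_first_edge r hrpath her (Sym2.mem_mk_left x y)
      have hyy' : y = y' := by
        rw [Sym2.eq_iff] at he_eq
        rcases he_eq with ⟨_, h⟩ | ⟨h1, _⟩
        · exact h
        · exact absurd h1 hxy'.ne
      subst hyy'
      -- r' : G.Walk y z ; build p := r'.concat (hxz.symm : G.Adj z x)
      have hr'path : r'.IsPath ∧ x ∉ r'.support := by
        have := hrpath
        rw [hr_eq, SimpleGraph.Walk.cons_isPath_iff] at this
        exact this
      refine ⟨x, y, r'.concat hxz.symm, ?_, rfl, ?_, ?_⟩
      · rw [← SimpleGraph.Walk.isPath_reverse_iff, SimpleGraph.Walk.reverse_concat]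
        rw [SimpleGraph.Walk.cons_isPath_iff]
        refine ⟨hr'path.1.reverse, ?_⟩
        rw [SimpleGraph.Walk.support_reverse, List.mem_reverse]
        exact hr'path.2
      · rw [SimpleGraph.Walk.edges_concat, List.concat_eq_append, List.mem_append]
        rintro (h1 | h2)
        · -- s(x,y) ∈ r'.edges, but r = cons hxy' r' has nodup edges with head s(x,y)
          have hnd : r.edges.Nodup := hrpath.isTrail.edges_nodup
          rw [hr_eq, SimpleGraph.Walk.edges_cons] at hnd
          exact (List.nodup_cons.mp hnd).1 h1
        · rw [List.mem_singleton, Sym2.eq_iff] at h2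
          rcases h2 with ⟨h3, _⟩ | ⟨_, h4⟩
          · exact hxz.ne h3
          · exact hez (by rw [h4])
      · have h1 : (SimpleGraph.Walk.cons hxz q).edges.toFinset
            = insert (s(x,z)) q.edges.toFinset := by
          rw [SimpleGraph.Walk.edges_cons, List.toFinset_cons]
        have hqr : q.edges.toFinset = insert (s(x,y)) r'.edges.toFinset := by
          have hq2 : q.edges.toFinset = r.edges.toFinset := by
            rw [hrdef, SimpleGraph.Walk.edges_reverse]; ext a; simp
          rw [hq2, hr_eq, SimpleGraph.Walk.edges_cons, List.toFinset_cons]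
        have hp : (r'.concat hxz.symm).edges.toFinset = insert (s(z,x)) r'.edges.toFinset := by
          rw [SimpleGraph.Walk.edges_concat, List.concat_eq_append, List.toFinset_append]
          ext a; simp [Finset.mem_union, or_comm]
        rw [← hetf, h1, hqr, hp, show (s(z,x) : Sym2 V) = s(x,z) from Sym2.eq_swap,
          Finset.insert_comm]
/-- A finite edge set `s` is a cycle of `G` if it is the edge set of some cycle walk. -/
def IsCycleSet {V : Type} [DecidableEq V] (G : SimpleGraph V) (s : Finset (Sym2 V)) : Prop :=
  ∃ (u : V) (w : G.Walk u u), w.IsCycle ∧ w.edges.toFinset = s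

/-- `T` is a spanning tree of `G`. -/
def IsSpanningTree {V : Type} (G T : SimpleGraph V) : Prop :=
  T ≤ G ∧ T.IsTree

/-- `σ` is a fundamental cycle of the spanning tree `T` of `G`:
the unique cycle of `T` plus one edge of `G` not in `T`. -/
def IsFundamentalCycle {V : Type} [DecidableEq V] (G T : SimpleGraph V)
    (σ : Finset (Sym2 V)) : Prop :=
  ∃ e ∈ G.edgeSet, e ∉ T.edgeSet ∧ IsCycleSet (T ⊔ SimpleGraph.fromEdgeSet {e}) σ

/-- `C` is an arboreal set of cycles of `G`: every spanning tree of `G`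
has a fundamental cycle belonging to `C`. -/
def Arboreal {V : Type} [DecidableEq V] (G : SimpleGraph V)
    (C : Set (Finset (Sym2 V))) : Prop :=
  ∀ T : SimpleGraph V, IsSpanningTree G T → ∃ σ ∈ C, IsFundamentalCycle G T σ

/-- `C` cyclically spans the cycle space of `G`: every cycle of `G` is a symmetric
difference of a list of members of `C` all of whose partial symmetric differences
are again cycles of `G`. -/
def CyclicallySpans {V : Type} [DecidableEq V] (G : SimpleGraph V)
    (C : Set (Finset (Sym2 V))) : Prop :=
  ∀ σ : Finset (Sym2 V), IsCycleSet G σ →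
    ∃ l : List (Finset (Sym2 V)), l ≠ [] ∧ (∀ c ∈ l, c ∈ C) ∧
      σ = l.foldl (· ∆ ·) ∅ ∧
      ∀ i, 2 ≤ i → i ≤ l.length → IsCycleSet G ((l.take i).foldl (· ∆ ·) ∅)

/-- The tree graph `T(G, C)`: vertices are the spanning trees of `G`, two trees
adjacent iff their union contains exactly one cycle and this cycle lies in `C`. -/
def treeGraph {V : Type} [DecidableEq V] (G : SimpleGraph V)
    (C : Set (Finset (Sym2 V))) :
    SimpleGraph {T : SimpleGraph V // IsSpanningTree G T} :=
  SimpleGraph.fromRel (fun R S =>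
    ∃ σ ∈ C, IsCycleSet (R.1 ⊔ S.1) σ ∧ ∀ σ', IsCycleSet (R.1 ⊔ S.1) σ' → σ' = σ)

variable {V : Type} [DecidableEq V]

lemma IsCycleSet.mono {H H' : SimpleGraph V} (hle : H ≤ H') {s : Finset (Sym2 V)}
    (hs : IsCycleSet H s) : IsCycleSet H' s := by
  obtain ⟨u, w, hw, hws⟩ := hs
  refine ⟨u, w.transfer H' (fun e he => SimpleGraph.edgeSet_mono hle
    (SimpleGraph.Walk.edges_subset_edgeSet w he)), hw.transfer _, ?_⟩
  rw [SimpleGraph.Walk.edges_transfer]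
  exact hws

lemma IsCycleSet.nonempty {H : SimpleGraph V} {s : Finset (Sym2 V)}
    (hs : IsCycleSet H s) : s ≠ ∅ := by
  obtain ⟨u, w, hw, rfl⟩ := hs
  have h3 := hw.three_le_length
  intro h
  rw [List.toFinset_eq_empty_iff] at h
  have := SimpleGraph.Walk.length_edges w
  rw [h] at this
  simp at this
  omega

lemma IsCycleSet.subset_edgeSet {H : SimpleGraph V} {s : Finset (Sym2 V)}
    (hs : IsCycleSet H s) : ∀ f ∈ s, f ∈ H.edgeSet := by
  obtain ⟨u, w, hw, rfl⟩ := hs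
  intro f hf
  rw [List.mem_toFinset] at hf
  exact SimpleGraph.Walk.edges_subset_edgeSet w hf

lemma IsCycleSet.even {H : SimpleGraph V} {s : Finset (Sym2 V)}
    (hs : IsCycleSet H s) (v : V) : Even (edeg s v) := by
  obtain ⟨u, w, hw, rfl⟩ := hs
  exact cycle_even_edeg hw v

/-- Even edge subsets of a path are empty. -/
lemma even_subset_path_empty {G : SimpleGraph V} {u v : V} (p : G.Walk u v) (hp : p.IsPath) :
    ∀ s : Finset (Sym2 V), (∀ x, Even (edeg s x)) → (∀ f ∈ s, f ∈ p.edges) → s = ∅ := by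
  induction p with
  | nil => intro s _ hsub; ext f; simp only [Finset.notMem_empty, iff_false]
           intro hf; simpa using hsub f hf
  | cons h q ih =>
    rename_i a b c
    intro s hev hsub
    have hnb : a ∉ q.support := (SimpleGraph.Walk.cons_isPath_iff h q).mp hp |>.2
    have hq : q.IsPath := ((SimpleGraph.Walk.cons_isPath_iff h q).mp hp).1
    have hfilter : s.filter (fun e => a ∈ e) ⊆ {s(a, b)} := by
      intro f hf
      rw [Finset.mem_filter] at hf
      have := hsub f hf.1
      rw [SimpleGraph.Walk.edges_cons] at this
      rcases List.mem_cons.mp this with h1 | h2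
      · simpa using h1
      · exfalso
        obtain ⟨c', rfl⟩ := Sym2.mem_iff_exists.mp hf.2
        exact hnb (SimpleGraph.Walk.fst_mem_support_of_mem_edges q h2)
    have hcard : edeg s a ≤ 1 := by
      have := Finset.card_le_card hfilter
      simpa [edeg] using this
    have h0 : edeg s a = 0 := by
      rcases hev a with ⟨k, hk⟩; omega
    have hab : s(a, b) ∉ s := by
      intro hmem
      have : s(a, b) ∈ s.filter (fun e => a ∈ e) :=
        Finset.mem_filter.mpr ⟨hmem, Sym2.mem_mk_left a b⟩
      rw [edeg] at h0
      rw [Finset.card_eq_zero.mp h0] at this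
      simp at this
    apply ih hq s hev
    intro f hf
    have := hsub f hf
    rw [SimpleGraph.Walk.edges_cons] at this
    rcases List.mem_cons.mp this with h1 | h2
    · exact absurd (h1 ▸ hf) hab
    · exact h2

/-- The graph of a single edge is acyclic. -/
lemma single_edge_acyclic (e : Sym2 V) : (SimpleGraph.fromEdgeSet {e}).IsAcyclic := by
  intro v w hw
  have hsub : ∀ f ∈ w.edges, f = e := by
    intro f hf
    have := SimpleGraph.Walk.edges_subset_edgeSet w hf
    rw [SimpleGraph.edgeSet_fromEdgeSet] at this
    exact this.1
  have h3 := hw.three_le_length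
  cases w with
  | nil => simp at h3
  | cons h1 q =>
    cases q with
    | nil => simp at h3
    | cons h2 q' =>
      rename_i x y
      have hnd := hw.isTrail.edges_nodup
      rw [SimpleGraph.Walk.edges_cons, SimpleGraph.Walk.edges_cons] at hnd
      have e1 : s(v, x) = e := hsub s(v, x) (by simp)
      have e2 : s(x, y) = e := hsub s(x, y) (by simp)
      rw [List.nodup_cons] at hnd
      exact hnd.1 (by rw [List.mem_cons]; left; rw [e1, e2])

/-- A cycle in a connected graph plus a non-edge, through that non-edge. -/
lemma exists_cycleSet_tree_plus {T : SimpleGraph V} (hT : T.Connected) {x y : V}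
    (hxy : x ≠ y) (he : s(x, y) ∉ T.edgeSet) :
    ∃ s : Finset (Sym2 V), IsCycleSet (T ⊔ SimpleGraph.fromEdgeSet {s(x, y)}) s ∧
      s(x, y) ∈ s ∧ ∀ f ∈ s, f ∈ T.edgeSet ∨ f = s(x, y) := by
  obtain ⟨w⟩ := hT.preconnected x y
  set p := w.toPath with hpdef
  set W := T ⊔ SimpleGraph.fromEdgeSet {s(x, y)} with hW
  have hTW : T ≤ W := le_sup_left
  have hedges : ∀ f ∈ (p : T.Walk x y).edges, f ∈ W.edgeSet :=
    fun f hf => SimpleGraph.edgeSet_mono hTW (SimpleGraph.Walk.edges_subset_edgeSet _ hf)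
  set q := ((p : T.Walk x y).transfer W hedges) with hq
  have hqpath : q.IsPath := p.2.transfer hedges
  have hadj : W.Adj x y := by
    rw [hW, SimpleGraph.sup_adj, SimpleGraph.fromEdgeSet_adj]
    right; exact ⟨rfl, hxy⟩
  have hqe : (p : T.Walk x y).edges = q.edges := (SimpleGraph.Walk.edges_transfer _ _).symm
  refine ⟨(SimpleGraph.Walk.cons hadj q.reverse).edges.toFinset, ⟨x, _, ?_, rfl⟩, ?_, ?_⟩
  · rw [SimpleGraph.Walk.cons_isCycle_iff]
    refine ⟨hqpath.reverse, ?_⟩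
    rw [SimpleGraph.Walk.edges_reverse, List.mem_reverse, ← hqe]
    intro hmem
    exact he (SimpleGraph.Walk.edges_subset_edgeSet _ hmem)
  · rw [SimpleGraph.Walk.edges_cons]; simp
  · intro f hf
    rw [List.mem_toFinset, SimpleGraph.Walk.edges_cons] at hf
    rcases List.mem_cons.mp hf with h1 | h2
    · right; exact h1
    · left
      rw [SimpleGraph.Walk.edges_reverse, List.mem_reverse, ← hqe] at h2
      exact SimpleGraph.Walk.edges_subset_edgeSet _ h2
variable {V : Type} [DecidableEq V]

lemma add_edge_acyclic {A : SimpleGraph V} (hA : A.IsAcyclic) {u v : V}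
    (hnr : ¬A.Reachable u v) :
    (A ⊔ SimpleGraph.fromEdgeSet {s(u, v)}).IsAcyclic := by
  have huv : u ≠ v := by rintro rfl; exact hnr (SimpleGraph.Reachable.refl u)
  intro x w hw
  by_cases he : s(u, v) ∈ w.edges
  · have hcyc : ∃ (z : V) (p : (A ⊔ SimpleGraph.fromEdgeSet {s(u, v)}).Walk z z),
        p.IsCycle ∧ s(u, v) ∈ p.edges := ⟨x, w, hw, he⟩
    have := (SimpleGraph.adj_and_reachable_delete_edges_iff_exists_cycle.mpr hcyc).2
    apply hnr
    apply SimpleGraph.Reachable.mono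
      (G := (A ⊔ SimpleGraph.fromEdgeSet {s(u, v)}) \ SimpleGraph.fromEdgeSet {s(u, v)}) _ this
    intro a b hab
    rw [SimpleGraph.sdiff_adj] at hab
    rcases hab.1 with h1 | h2
    · exact h1
    · exact absurd h2 hab.2
  · apply hA (w.transfer A ?_) (hw.transfer _)
    intro f hf
    have := SimpleGraph.Walk.edges_subset_edgeSet w hf
    rw [SimpleGraph.edgeSet_sup, SimpleGraph.edgeSet_fromEdgeSet] at this
    rcases this with h1 | h2
    · exact h1
    · exfalso
      have : f = s(u, v) := h2.1
      exact he (this ▸ hf)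

lemma reachable_of_all_edges {G A : SimpleGraph V} {x y : V} (w : G.Walk x y)
    (h : ∀ a b, G.Adj a b → A.Reachable a b) : A.Reachable x y := by
  induction w with
  | nil => exact SimpleGraph.Reachable.refl _
  | cons hadj _ ih => exact (h _ _ hadj).trans ih

lemma exists_nonreachable_edge {G A : SimpleGraph V} (hG : G.Connected)
    (h : ¬A.Connected) : ∃ u v, G.Adj u v ∧ ¬A.Reachable u v := by
  by_contra hcon
  push_neg at hcon
  apply h
  rw [SimpleGraph.connected_iff]
  refine ⟨?_, hG.nonempty⟩
  intro a b
  obtain ⟨w⟩ := hG.preconnected a b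
  exact reachable_of_all_edges w hcon

lemma exists_spanning_tree_ext [Fintype V] {G : SimpleGraph V} (hG : G.Connected) :
    ∀ (n : ℕ) (A : SimpleGraph V), A ≤ G → A.IsAcyclic →
      (G.edgeSet \ A.edgeSet).ncard ≤ n → ∃ T, A ≤ T ∧ IsSpanningTree G T := by
  intro n
  induction n with
  | zero =>
    intro A hAG hA hcard
    by_cases hc : A.Connected
    · exact ⟨A, le_rfl, hAG, hc, hA⟩
    · exfalso
      obtain ⟨u, v, hadj, hnr⟩ := exists_nonreachable_edge hG hc
      have hmem : s(u, v) ∈ G.edgeSet \ A.edgeSet := by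
        refine ⟨hadj, ?_⟩
        intro hmem
        exact hnr (SimpleGraph.Adj.reachable hmem)
      have : 0 < (G.edgeSet \ A.edgeSet).ncard :=
        Set.ncard_pos (Set.toFinite _) |>.mpr ⟨_, hmem⟩
      omega
  | succ n ih =>
    intro A hAG hA hcard
    by_cases hc : A.Connected
    · exact ⟨A, le_rfl, hAG, hc, hA⟩
    · obtain ⟨u, v, hadj, hnr⟩ := exists_nonreachable_edge hG hc
      have huv : u ≠ v := by rintro rfl; exact hnr (SimpleGraph.Reachable.refl u)
      set A' := A ⊔ SimpleGraph.fromEdgeSet {s(u, v)} with hA'def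
      have hA'G : A' ≤ G := by
        rw [hA'def, sup_le_iff]
        refine ⟨hAG, ?_⟩
        intro a b hab
        rw [SimpleGraph.fromEdgeSet_adj, Set.mem_singleton_iff] at hab
        rw [Sym2.eq_iff] at hab
        rcases hab.1 with ⟨rfl, rfl⟩ | ⟨rfl, rfl⟩
        · exact hadj
        · exact hadj.symm
      have hA'acyc : A'.IsAcyclic := add_edge_acyclic hA hnr
      have hssub : G.edgeSet \ A'.edgeSet ⊂ G.edgeSet \ A.edgeSet := by
        constructor
        · intro f hf
          refine ⟨hf.1, fun hfa => hf.2 ?_⟩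
          rw [hA'def, SimpleGraph.edgeSet_sup]
          exact Or.inl hfa
        · intro hsub
          have hmem : s(u, v) ∈ G.edgeSet \ A.edgeSet :=
            ⟨hadj, fun hm => hnr (SimpleGraph.Adj.reachable hm)⟩
          have := hsub hmem
          apply this.2
          rw [hA'def, SimpleGraph.edgeSet_sup, SimpleGraph.edgeSet_fromEdgeSet]
          right
          exact ⟨rfl, by simp [Sym2.mk_isDiag_iff]; exact huv⟩
      have hlt : (G.edgeSet \ A'.edgeSet).ncard < (G.edgeSet \ A.edgeSet).ncard :=
        Set.ncard_lt_ncard hssub (Set.toFinite _)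
      obtain ⟨T, hT1, hT2⟩ := ih A' hA'G hA'acyc (by omega)
      exact ⟨T, le_trans le_sup_left hT1, hT2⟩
variable {V : Type} [DecidableEq V]

lemma fromEdgeSet_singleton_le {S : SimpleGraph V} {g : Sym2 V} (hg : g ∈ S.edgeSet) :
    SimpleGraph.fromEdgeSet {g} ≤ S := by
  intro a b hab
  rw [SimpleGraph.fromEdgeSet_adj, Set.mem_singleton_iff] at hab
  rw [← SimpleGraph.mem_edgeSet, hab.1]
  exact hg

lemma cycle_through_extra_edge {R : SimpleGraph V} (hRc : R.Connected) {g : Sym2 V}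
    (hgd : ¬g.IsDiag) (hgR : g ∉ R.edgeSet) :
    ∃ s : Finset (Sym2 V), IsCycleSet (R ⊔ SimpleGraph.fromEdgeSet {g}) s ∧
      g ∈ s ∧ ∀ f ∈ s, f ∈ R.edgeSet ∨ f = g := by
  induction g using Sym2.ind with
  | _ x y =>
  exact exists_cycleSet_tree_plus hRc (fun h => hgd (Sym2.mk_isDiag_iff.mpr h)) hgR

lemma acyclic_le_connected {R S : SimpleGraph V} (hR : R.IsAcyclic) (hS : S.Connected)
    (hSR : S ≤ R) : R = S := by
  apply le_antisymm _ hSR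
  intro a b hab
  by_contra hnadj
  obtain ⟨w⟩ := hS.preconnected a b
  set p := w.toPath with hp
  have hedges : ∀ f ∈ (p : S.Walk a b).edges, f ∈ R.edgeSet :=
    fun f hf => SimpleGraph.edgeSet_mono hSR (SimpleGraph.Walk.edges_subset_edgeSet _ hf)
  set q := (p : S.Walk a b).transfer R hedges with hq
  have hqpath : q.IsPath := p.2.transfer hedges
  apply hR (SimpleGraph.Walk.cons hab.symm q)
  rw [SimpleGraph.Walk.cons_isCycle_iff]
  refine ⟨hqpath, ?_⟩
  intro hmem
  rw [hq, SimpleGraph.Walk.edges_transfer] at hmem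
  have := SimpleGraph.Walk.edges_subset_edgeSet _ hmem
  rw [SimpleGraph.mem_edgeSet] at this
  exact hnadj this.symm

lemma adjacent_trees_structure [Fintype V] {G R S : SimpleGraph V}
    (hR : IsSpanningTree G R) (hS : IsSpanningTree G S) (hne : R ≠ S)
    {α : Finset (Sym2 V)} (hα : IsCycleSet (R ⊔ S) α)
    (huniq : ∀ σ', IsCycleSet (R ⊔ S) σ' → σ' = α) :
    ∃ g, g ∈ S.edgeSet ∧ g ∉ R.edgeSet ∧ R ⊔ S = R ⊔ SimpleGraph.fromEdgeSet {g} ∧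
      (∀ f ∈ S.edgeSet, f ∉ R.edgeSet → f = g) := by
  -- there is an edge of S not in R
  have hex : ∃ g ∈ S.edgeSet, g ∉ R.edgeSet := by
    by_contra hcon
    push_neg at hcon
    have hSR : S ≤ R := by
      intro a b hab
      rw [← SimpleGraph.mem_edgeSet]
      exact hcon _ ((SimpleGraph.mem_edgeSet S).mpr hab)
    exact hne (acyclic_le_connected hR.2.IsAcyclic hS.2.isConnected hSR)
  obtain ⟨g, hgS, hgR⟩ := hex
  have key : ∀ f ∈ S.edgeSet, f ∉ R.edgeSet → f = g := by
    intro f hfS hfR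
    by_contra hfg
    -- two distinct fundamental cycles
    obtain ⟨c₁, hc₁, hgc₁, hc₁sub⟩ := cycle_through_extra_edge hR.2.isConnected
      (S.not_isDiag_of_mem_edgeSet hgS) hgR
    obtain ⟨c₂, hc₂, hfc₂, hc₂sub⟩ := cycle_through_extra_edge hR.2.isConnected
      (S.not_isDiag_of_mem_edgeSet hfS) hfR
    have hle1 : R ⊔ SimpleGraph.fromEdgeSet {g} ≤ R ⊔ S :=
      sup_le_sup le_rfl (fromEdgeSet_singleton_le hgS)
    have hle2 : R ⊔ SimpleGraph.fromEdgeSet {f} ≤ R ⊔ S :=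
      sup_le_sup le_rfl (fromEdgeSet_singleton_le hfS)
    have h1 : c₁ = α := huniq c₁ (hc₁.mono hle1)
    have h2 : c₂ = α := huniq c₂ (hc₂.mono hle2)
    have : f ∈ c₁ := by rw [h1, ← h2]; exact hfc₂
    rcases hc₁sub f this with h3 | h4
    · exact hfR h3
    · exact hfg h4
  refine ⟨g, hgS, hgR, ?_, key⟩
  ext a b
  simp only [SimpleGraph.sup_adj, SimpleGraph.fromEdgeSet_adj, Set.mem_singleton_iff]
  constructor
  · rintro (h | h)
    · exact Or.inl h
    · by_cases hr : R.Adj a b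
      · exact Or.inl hr
      · right
        refine ⟨key s(a, b) ((SimpleGraph.mem_edgeSet S).mpr h) ?_, h.ne⟩
        rw [SimpleGraph.mem_edgeSet]
        exact hr
  · rintro (h | ⟨h1, h2⟩)
    · exact Or.inl h
    · right
      rw [← SimpleGraph.mem_edgeSet, h1]
      exact hgS
variable {V : Type} [DecidableEq V]

/-- The conclusion of `CyclicallySpans` for a single cycle `s`. -/
def GoodList (G : SimpleGraph V) (C : Set (Finset (Sym2 V))) (σ : Finset (Sym2 V)) : Prop :=
  ∃ l : List (Finset (Sym2 V)), l ≠ [] ∧ (∀ c ∈ l, c ∈ C) ∧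
    σ = l.foldl (· ∆ ·) ∅ ∧
    ∀ i, 2 ≤ i → i ≤ l.length → IsCycleSet G ((l.take i).foldl (· ∆ ·) ∅)

lemma cycleSet_mem_of_not_tree [Fintype V] {R : SimpleGraph V} (hR : R.IsAcyclic)
    {e : Sym2 V} {s : Finset (Sym2 V)}
    (hs : IsCycleSet (R ⊔ SimpleGraph.fromEdgeSet {e}) s) : e ∈ s := by
  by_contra he
  apply hs.nonempty
  apply even_subset_acyclic_empty hR _ hs.even
  intro f hf
  have := hs.subset_edgeSet f hf
  rw [SimpleGraph.edgeSet_sup, SimpleGraph.edgeSet_fromEdgeSet] at this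
  rcases this with h1 | h2
  · exact h1
  · exact absurd (h2.1 ▸ hf) he

lemma claim_along_walk [Fintype V] {G : SimpleGraph V} {C : Set (Finset (Sym2 V))}
    {R S : {T : SimpleGraph V // IsSpanningTree G T}} (p : (treeGraph G C).Walk R S) :
    ∀ (e : Sym2 V), e ∈ G.edgeSet → e ∉ R.1.edgeSet → e ∈ S.1.edgeSet →
      ∀ s, IsCycleSet (R.1 ⊔ SimpleGraph.fromEdgeSet {e}) s → GoodList G C s := by
  induction p with
  | nil =>
    intro e heG heR heS s hs
    exact absurd heS heR
  | cons hadj p ih =>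
    rename_i R R' S
    intro e heG heR heS s hs
    -- unpack the adjacency
    rw [treeGraph, SimpleGraph.fromRel_adj] at hadj
    obtain ⟨hne, hrel⟩ := hadj
    have hcomm : R'.1 ⊔ R.1 = R.1 ⊔ R'.1 := sup_comm _ _
    have hrel' : ∃ α ∈ C, IsCycleSet (R.1 ⊔ R'.1) α ∧
        ∀ σ', IsCycleSet (R.1 ⊔ R'.1) σ' → σ' = α := by
      rcases hrel with h | h
      · exact h
      · obtain ⟨α, hαC, h1, h2⟩ := h
        rw [hcomm] at h1
        exact ⟨α, hαC, h1, fun σ' hσ' => h2 σ' (by rw [hcomm]; exact hσ')⟩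
    obtain ⟨α, hαC, hαcyc, huniq⟩ := hrel'
    have hRne : R.1 ≠ R'.1 := fun h => hne (Subtype.ext h)
    have hRacyc : R.1.IsAcyclic := R.2.2.IsAcyclic
    by_cases heR' : e ∈ R'.1.edgeSet
    · -- the cycle s is the unique cycle α of R ⊔ R'
      have hle : R.1 ⊔ SimpleGraph.fromEdgeSet {e} ≤ R.1 ⊔ R'.1 :=
        sup_le_sup le_rfl (fromEdgeSet_singleton_le heR')
      have hsα : s = α := huniq s (hs.mono hle)
      refine ⟨[s], by simp, ?_, by simp [← Finset.bot_eq_empty, bot_symmDiff], ?_⟩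
      · intro c hc
        rw [List.mem_singleton] at hc
        subst hc
        rw [hsα]; exact hαC
      · intro i h2 h1; simp at h1; omega
    · -- inductive case
      obtain ⟨s', hs'cyc, hes', hs'sub⟩ := cycle_through_extra_edge R'.2.2.isConnected
        (G.not_isDiag_of_mem_edgeSet heG) heR'
      obtain ⟨l', hl'ne, hl'C, hl'fold, hl'part⟩ := ih e heG heR' heS s' hs'cyc
      obtain ⟨g, hgS, hgR, hsup_eq, hguniq⟩ :=
        adjacent_trees_structure R.2 R'.2 hRne hαcyc huniq
      have hes : e ∈ s := cycleSet_mem_of_not_tree hRacyc hs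
      by_cases hD : s ∆ s' = ∅
      · have : s = s' := by
          have := symmDiff_eq_bot.mp (by rw [← Finset.bot_eq_empty] at hD; exact hD)
          exact this
        rw [this]
        exact ⟨l', hl'ne, hl'C, hl'fold, hl'part⟩
      · -- s ∆ s' = α
        have hαsub : ∀ f ∈ α, f ∈ R.1.edgeSet ∨ f = g := by
          intro f hf
          have := hαcyc.subset_edgeSet f hf
          rw [SimpleGraph.edgeSet_sup] at this
          rcases this with h1 | h2
          · exact Or.inl h1
          · by_cases hfR : f ∈ R.1.edgeSet
            · exact Or.inl hfR
            · exact Or.inr (hguniq f h2 hfR)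
        have hDsub : ∀ f ∈ s ∆ s', f ∈ R.1.edgeSet ∨ f = g := by
          intro f hf
          have hfe : f ≠ e := by
            rintro rfl
            rw [Finset.mem_symmDiff] at hf
            tauto
          rcases symmDiff_toFinset_mem hf with h1 | h2
          · have := hs.subset_edgeSet f h1
            rw [SimpleGraph.edgeSet_sup, SimpleGraph.edgeSet_fromEdgeSet] at this
            rcases this with h3 | h4
            · exact Or.inl h3
            · exact absurd h4.1 hfe
          · rcases hs'sub f h2 with h3 | h4
            · by_cases hfR : f ∈ R.1.edgeSet
              · exact Or.inl hfR
              · exact Or.inr (hguniq f h3 hfR)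
            · exact absurd h4 hfe
        have hDα : s ∆ s' = α := by
          apply even_subset_acyclic_plus_unique hRacyc g hDsub hαsub
            (fun v => even_edeg_symmDiff (hs.even v) (hs'cyc.even v))
            (fun v => hαcyc.even v) hD hαcyc.nonempty
        have hss' : s = s' ∆ α := by
          rw [← hDα, symmDiff_comm s s', symmDiff_symmDiff_cancel_left]
        refine ⟨l' ++ [α], by simp, ?_, ?_, ?_⟩
        · intro c hc
          rcases List.mem_append.mp hc with h1 | h2
          · exact hl'C c h1
          · rw [List.mem_singleton] at h2; subst h2; exact hαC
        · rw [List.foldl_append, ← hl'fold]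
          simpa using hss'
        · intro i h2i hile
          rw [List.length_append, List.length_singleton] at hile
          by_cases hii : i ≤ l'.length
          · rw [List.take_append_of_le_length hii]
            exact hl'part i h2i hii
          · have : i = l'.length + 1 := by omega
            subst this
            rw [List.take_of_length_le (by simp)]
            rw [List.foldl_append, ← hl'fold]
            have hfold : s' ∆ α = s := hss'.symm
            simp only [List.foldl_cons, List.foldl_nil]
            rw [hfold]
            -- s is a cycle of G
            apply hs.mono
            apply sup_le R.2.1
            exact fromEdgeSet_singleton_le heG

/-- **Li, Neumann-Lara, Rivera-Campo.** If `C` is a set of cycles of a connected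
graph `G` such that the tree graph `T(G, C)` is connected, then `C` cyclically
spans the cycle space of `G`. -/
theorem statement0 {V : Type} [Fintype V] [DecidableEq V] (G : SimpleGraph V)
    (hG : G.Connected) (C : Set (Finset (Sym2 V)))
    (hC : ∀ σ ∈ C, IsCycleSet G σ)
    (hconn : (treeGraph G C).Connected) :
    CyclicallySpans G C := by
  intro σ hσ
  obtain ⟨u, w, hw, rfl⟩ := hσ
  -- pick an edge of the cycle
  have h3 := hw.three_le_length
  have hne : w.edges ≠ [] := by
    intro h
    have := SimpleGraph.Walk.length_edges w
    rw [h] at this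
    simp at this
    omega
  obtain ⟨e, he⟩ := List.exists_mem_of_ne_nil _ hne
  obtain ⟨x, y, p, hppath, heq, henp, hdecomp⟩ := cycle_edge_decomp w hw he
  subst heq
  have heG : s(x, y) ∈ G.edgeSet := SimpleGraph.Walk.edges_subset_edgeSet w he
  have hxy : x ≠ y := fun h => G.not_isDiag_of_mem_edgeSet heG (Sym2.mk_isDiag_iff.mpr h)
  -- the path graph
  set P := SimpleGraph.fromEdgeSet (↑(p.edges.toFinset) : Set (Sym2 V)) with hP
  have hPedge : ∀ f, f ∈ P.edgeSet → f ∈ p.edges := by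
    intro f hf
    rw [hP, SimpleGraph.edgeSet_fromEdgeSet] at hf
    have := hf.1
    simpa using this
  have hPacyc : P.IsAcyclic := by
    intro v w' hw'
    have hsub : ∀ f ∈ w'.edges.toFinset, f ∈ p.edges := by
      intro f hf
      rw [List.mem_toFinset] at hf
      exact hPedge f (SimpleGraph.Walk.edges_subset_edgeSet w' hf)
    have hempty := even_subset_path_empty p hppath w'.edges.toFinset
      (cycle_even_edeg hw') hsub
    have h3' := hw'.three_le_length
    have hlen := SimpleGraph.Walk.length_edges w'
    rw [List.toFinset_eq_empty_iff] at hempty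
    rw [hempty] at hlen
    simp at hlen
    omega
  have hPG : P ≤ G := by
    intro a b hab
    rw [hP, SimpleGraph.fromEdgeSet_adj] at hab
    have : s(a, b) ∈ p.edges := by simpa using hab.1
    rw [← SimpleGraph.mem_edgeSet]
    exact SimpleGraph.Walk.edges_subset_edgeSet p this
  obtain ⟨T, hPT, hTsp⟩ := exists_spanning_tree_ext hG
    ((G.edgeSet \ P.edgeSet).ncard) P hPG hPacyc le_rfl
  have hpT : ∀ f ∈ p.edges, f ∈ T.edgeSet := by
    intro f hf
    induction f using Sym2.ind with
    | _ a b =>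
    have hfG : s(a, b) ∈ G.edgeSet := SimpleGraph.Walk.edges_subset_edgeSet p hf
    have hPadj : P.Adj a b := by
      rw [hP, SimpleGraph.fromEdgeSet_adj]
      exact ⟨by simpa using hf, fun h => G.not_isDiag_of_mem_edgeSet hfG
        (Sym2.mk_isDiag_iff.mpr h)⟩
    exact (SimpleGraph.mem_edgeSet T).mpr (hPT hPadj)
  have heT : s(x, y) ∉ T.edgeSet := by
    intro hmem
    have hsub : ∀ f ∈ w.edges.toFinset, f ∈ T.edgeSet := by
      intro f hf
      rw [hdecomp, Finset.mem_insert] at hf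
      rcases hf with rfl | hf
      · exact hmem
      · exact hpT f (List.mem_toFinset.mp hf)
    have := even_subset_acyclic_empty hTsp.2.IsAcyclic hsub (cycle_even_edeg hw)
    rw [this] at hdecomp
    exact absurd hdecomp.symm (by simp)
  -- σ is a cycle of T + e
  have hσcyc : IsCycleSet (T ⊔ SimpleGraph.fromEdgeSet {s(x, y)}) w.edges.toFinset := by
    have hsub : ∀ f ∈ w.edges, f ∈ (T ⊔ SimpleGraph.fromEdgeSet {s(x, y)}).edgeSet := by
      intro f hf
      rw [SimpleGraph.edgeSet_sup, SimpleGraph.edgeSet_fromEdgeSet]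
      have : f ∈ w.edges.toFinset := List.mem_toFinset.mpr hf
      rw [hdecomp, Finset.mem_insert] at this
      rcases this with rfl | hthis
      · right
        exact ⟨rfl, fun h => hxy (Sym2.mk_isDiag_iff.mp h)⟩
      · left
        exact hpT f (List.mem_toFinset.mp hthis)
    refine ⟨u, w.transfer _ hsub, hw.transfer hsub, ?_⟩
    rw [SimpleGraph.Walk.edges_transfer]
  -- a spanning tree containing e
  have hsingle_le : SimpleGraph.fromEdgeSet {s(x, y)} ≤ G := fromEdgeSet_singleton_le heG
  obtain ⟨T₁, hT₁ge, hT₁sp⟩ := exists_spanning_tree_ext hG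
    ((G.edgeSet \ (SimpleGraph.fromEdgeSet {s(x, y)}).edgeSet).ncard) _
    hsingle_le (single_edge_acyclic _) le_rfl
  have heT₁ : s(x, y) ∈ T₁.edgeSet := by
    rw [SimpleGraph.mem_edgeSet]
    apply hT₁ge
    rw [SimpleGraph.fromEdgeSet_adj]
    exact ⟨rfl, hxy⟩
  obtain ⟨pw⟩ := hconn.preconnected ⟨T, hTsp⟩ ⟨T₁, hT₁sp⟩
  exact claim_along_walk pw s(x, y) heG heT heT₁ _ hσcyc
end

section
/- Let G_t and G_{t+1} be as in the iterated octahedron construction, and suppose C_t is arboreal with respect to G_t. If P is a spanning tree of G_{t+1} none of whose fundamental cycles lies in C_{t+1}, then the edges of P not belonging to G_t form a path of length 3 through the three new vertices, and deleting the three new vertices from P yields a spanning tree of G_t none of whose fundamental cycles lies in C_t; hence C_{t+1} is arboreal with respect to G_{t+1}. -/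
open scoped symmDiff

section OctaHelpers

open SimpleGraph

lemma triWalk {W : Type} [DecidableEq W] {G : SimpleGraph W} {u v w : W}
    (h1 : G.Adj u v) (h2 : G.Adj v w) (h3 : G.Adj w u) :
    IsCycleSet G {s(u,v), s(v,w), s(w,u)} := by
  have nuv := h1.ne
  have nvw := h2.ne
  have nwu := h3.ne
  refine ⟨u, .cons h1 (.cons h2 (.cons h3 .nil)), ?_, ?_⟩
  · constructor
    · constructor
      · constructor
        simp only [SimpleGraph.Walk.edges_cons, SimpleGraph.Walk.edges_nil]
        simp [List.nodup_cons, Sym2.eq_iff]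
        tauto
      · simp
    · simp only [SimpleGraph.Walk.support_cons, SimpleGraph.Walk.support_nil, List.tail_cons]
      simp [List.nodup_cons]
      tauto
  · simp only [SimpleGraph.Walk.edges_cons, SimpleGraph.Walk.edges_nil]
    simp

lemma internal_two_nbrs {W : Type} [DecidableEq W] {G : SimpleGraph W} {u v t : W}
    (p : G.Walk u v) (hp : p.IsPath) (ht : t ∈ p.support) (hu : t ≠ u) (hv : t ≠ v) :
    ∃ w1 w2, w1 ≠ w2 ∧ G.Adj t w1 ∧ G.Adj t w2 ∧ w1 ∈ p.support ∧ w2 ∈ p.support := by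
  have hspec := p.take_spec ht
  set q := p.takeUntil t ht with hq
  set r := p.dropUntil t ht with hr
  have hnodup : (q.support ++ r.support.tail).Nodup := by
    rw [← SimpleGraph.Walk.support_append, hspec]
    exact hp.support_nodup
  obtain ⟨w1, ha1, q', hq'⟩ := q.reverse.exists_eq_cons_of_ne hu
  obtain ⟨w2, ha2, r', hr'⟩ := r.exists_eq_cons_of_ne hv
  have hw1q : w1 ∈ q.support := by
    have : w1 ∈ q.reverse.support := by rw [hq']; simp
    simpa using this
  have hw2r : w2 ∈ r.support.tail := by
    rw [hr']; simp
  refine ⟨w1, w2, ?_, ha1, ha2, ?_, ?_⟩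
  · rintro rfl
    exact (List.disjoint_of_nodup_append hnodup) hw1q hw2r
  · exact (p.support_takeUntil_subset ht) hw1q
  · exact (p.support_dropUntil_subset ht) (List.mem_of_mem_tail hw2r)

lemma octaProp (exy exz eyz exb exc eya eyc eza ezb Sx Sy Sz : Prop)
 (A1 : ¬(exy∧eyc)) (A2 : ¬(exy∧exc)) (A3 : ¬(eyc∧exc))
 (B1 : ¬(exz∧ezb)) (B2 : ¬(exz∧exb)) (B3 : ¬(ezb∧exb))
 (C1 : ¬(eyz∧eza)) (C2 : ¬(eyz∧eya)) (C3 : ¬(eza∧eya))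
 (G : ¬(exy∧eyz∧exz))
 (degx : exy∨exz∨exb∨exc) (degy : exy∨eyz∨eya∨eyc) (degz : exz∨eyz∨eza∨ezb)
 (Hx : Sx → (exy∧exz∧Sy∧Sz) ∨ (exy∧exb∧Sy) ∨ (exz∧exc∧Sz))
 (Hy : Sy → (exy∧eyz∧Sx∧Sz) ∨ (exy∧eya∧Sx) ∨ (eyz∧eyc∧Sz))
 (Hz : Sz → (exz∧eyz∧Sx∧Sy) ∨ (exz∧eza∧Sx) ∨ (eyz∧ezb∧Sy))
 (hS : Sx ∨ Sy ∨ Sz) : False := by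
  rcases hS with hx | hy | hz
  · rcases Hx hx with ⟨h1,h2,hy,hz⟩ | ⟨h1,h2,hy⟩ | ⟨h1,h2,hz⟩
    · rcases Hy hy with ⟨g1,g2,_,_⟩ | ⟨g1,g2,_⟩ | ⟨g1,g2,_⟩
      · exact G ⟨h1, g2, h2⟩
      · rcases Hz hz with ⟨f1,f2,_,_⟩ | ⟨f1,f2,_⟩ | ⟨f1,f2,_⟩
        · exact G ⟨h1, f2, h2⟩
        · exact C3 ⟨f2, g2⟩
        · exact G ⟨h1, f1, h2⟩
      · exact G ⟨h1, g1, h2⟩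
    · rcases Hy hy with ⟨g1,g2,_,hz⟩ | ⟨g1,g2,_⟩ | ⟨g1,g2,_⟩
      · rcases Hz hz with ⟨f1,f2,_,_⟩ | ⟨f1,f2,_⟩ | ⟨f1,f2,_⟩
        · exact B2 ⟨f1, h2⟩
        · exact B2 ⟨f1, h2⟩
        · exact B3 ⟨f2, h2⟩
      · rcases degz with f | f | f | f
        · exact B2 ⟨f, h2⟩
        · exact C2 ⟨f, g2⟩
        · exact C3 ⟨f, g2⟩
        · exact B3 ⟨f, h2⟩
      · exact A1 ⟨h1, g2⟩
    · rcases Hz hz with ⟨f1,f2,_,hy⟩ | ⟨f1,f2,_⟩ | ⟨f1,f2,_⟩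
      · rcases Hy hy with ⟨g1,g2,_,_⟩ | ⟨g1,g2,_⟩ | ⟨g1,g2,_⟩
        · exact A2 ⟨g1, h2⟩
        · exact A2 ⟨g1, h2⟩
        · exact A3 ⟨g2, h2⟩
      · rcases degy with g | g | g | g
        · exact A2 ⟨g, h2⟩
        · exact C1 ⟨g, f2⟩
        · exact C3 ⟨f2, g⟩
        · exact A3 ⟨g, h2⟩
      · exact B1 ⟨h1, f2⟩
  · rcases Hy hy with ⟨g1,g2,hx,hz⟩ | ⟨g1,g2,hx⟩ | ⟨g1,g2,hz⟩
    · rcases Hx hx with ⟨h1,h2,_,_⟩ | ⟨h1,h2,_⟩ | ⟨h1,h2,_⟩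
      · exact G ⟨g1, g2, h2⟩
      · rcases Hz hz with ⟨f1,f2,_,_⟩ | ⟨f1,f2,_⟩ | ⟨f1,f2,_⟩
        · exact B2 ⟨f1, h2⟩
        · exact B2 ⟨f1, h2⟩
        · exact B3 ⟨f2, h2⟩
      · exact G ⟨g1, g2, h1⟩
    · rcases Hx hx with ⟨h1,h2,_,hz⟩ | ⟨h1,h2,_⟩ | ⟨h1,h2,_⟩
      · rcases Hz hz with ⟨f1,f2,_,_⟩ | ⟨f1,f2,_⟩ | ⟨f1,f2,_⟩
        · exact G ⟨h1, f2, h2⟩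
        · exact C3 ⟨f2, g2⟩
        · exact C2 ⟨f1, g2⟩
      · rcases degz with f | f | f | f
        · exact B2 ⟨f, h2⟩
        · exact C2 ⟨f, g2⟩
        · exact C3 ⟨f, g2⟩
        · exact B3 ⟨f, h2⟩
      · exact A2 ⟨g1, h2⟩
    · rcases Hz hz with ⟨f1,f2,hx,_⟩ | ⟨f1,f2,hx⟩ | ⟨f1,f2,_⟩
      · rcases Hx hx with ⟨h1,h2,_,_⟩ | ⟨h1,h2,_⟩ | ⟨h1,h2,_⟩
        · exact G ⟨h1, g1, h2⟩
        · exact A1 ⟨h1, g2⟩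
        · exact A3 ⟨g2, h2⟩
      · exact C1 ⟨g1, f2⟩
      · rcases degx with h | h | h | h
        · exact A1 ⟨h, g2⟩
        · exact B1 ⟨h, f2⟩
        · exact B3 ⟨f2, h⟩
        · exact A3 ⟨g2, h⟩
  · rcases Hz hz with ⟨f1,f2,hx,hy⟩ | ⟨f1,f2,hx⟩ | ⟨f1,f2,hy⟩
    · rcases Hx hx with ⟨h1,h2,_,_⟩ | ⟨h1,h2,_⟩ | ⟨h1,h2,_⟩
      · exact G ⟨h1, f2, h2⟩
      · exact G ⟨h1, f2, f1⟩
      · rcases Hy hy with ⟨g1,g2,_,_⟩ | ⟨g1,g2,_⟩ | ⟨g1,g2,_⟩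
        · exact G ⟨g1, g2, h1⟩
        · exact A2 ⟨g1, h2⟩
        · exact A3 ⟨g2, h2⟩
    · rcases Hx hx with ⟨h1,h2,hy,_⟩ | ⟨h1,h2,hy⟩ | ⟨h1,h2,_⟩
      · rcases Hy hy with ⟨g1,g2,_,_⟩ | ⟨g1,g2,_⟩ | ⟨g1,g2,_⟩
        · exact G ⟨g1, g2, h2⟩
        · exact C3 ⟨f2, g2⟩
        · exact C1 ⟨g1, f2⟩
      · exact B2 ⟨f1, h2⟩
      · rcases degy with g | g | g | g
        · exact A2 ⟨g, h2⟩
        · exact C1 ⟨g, f2⟩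
        · exact C3 ⟨f2, g⟩
        · exact A3 ⟨g, h2⟩
    · rcases Hy hy with ⟨g1,g2,hx,_⟩ | ⟨g1,g2,hx⟩ | ⟨g1,g2,_⟩
      · rcases Hx hx with ⟨h1,h2,_,_⟩ | ⟨h1,h2,_⟩ | ⟨h1,h2,_⟩
        · exact B1 ⟨h2, f2⟩
        · exact B3 ⟨f2, h2⟩
        · exact B1 ⟨h1, f2⟩
      · exact C2 ⟨f1, g2⟩
      · rcases degx with h | h | h | h
        · exact A1 ⟨h, g2⟩
        · exact B1 ⟨h, f2⟩
        · exact B3 ⟨f2, h⟩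
        · exact A3 ⟨g2, h⟩

end OctaHelpers
/-- One step of the iterated octahedron construction.  Here `Gt` is the previous
graph, drawn in the plane with outer triangle `a b c`, and `Gt1` is obtained from
`Gt` by adding a new outer octahedral layer on three new vertices
`x = inr 0`, `y = inr 1`, `z = inr 2` (forming the new outer triangle), with
`x` adjacent to `b, c`, `y` adjacent to `a, c` and `z` adjacent to `a, b`.
`Ct1` consists of the (images of the) cycles of `Ct` together with the six new
triangular faces of the layer.  If `Ct` is arboreal with respect to `Gt`, then any
spanning tree `P` of `Gt1` none of whose fundamental cycles lies in `Ct1` would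
have its non-`Gt` edges forming a path of length `3` through the three new
vertices, and would restrict to a spanning tree of `Gt` with no fundamental cycle
in `Ct`; hence `Ct1` is arboreal with respect to `Gt1`. -/
theorem statement9 {V : Type} [Fintype V] [DecidableEq V]
    (Gt : SimpleGraph V) (Gt1 : SimpleGraph (V ⊕ Fin 3))
    (a b c : V) (hab : a ≠ b) (hac : a ≠ c) (hbc : b ≠ c)
    (houter : Gt.Adj a b ∧ Gt.Adj b c ∧ Gt.Adj a c)
    (hadjV : ∀ u v : V, Gt1.Adj (Sum.inl u) (Sum.inl v) ↔ Gt.Adj u v)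
    (hadjNew : ∀ i j : Fin 3, Gt1.Adj (Sum.inr i) (Sum.inr j) ↔ i ≠ j)
    (hadjX : ∀ v : V, Gt1.Adj (Sum.inr 0) (Sum.inl v) ↔ (v = b ∨ v = c))
    (hadjY : ∀ v : V, Gt1.Adj (Sum.inr 1) (Sum.inl v) ↔ (v = a ∨ v = c))
    (hadjZ : ∀ v : V, Gt1.Adj (Sum.inr 2) (Sum.inl v) ↔ (v = a ∨ v = b))
    (Ct : Set (Finset (Sym2 V))) (hCt : ∀ s ∈ Ct, IsCycleSet Gt s)
    (Ct1 : Set (Finset (Sym2 (V ⊕ Fin 3))))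
    -- `Ct1` is `Ct` together with the six new triangular faces of the layer:
    (hCt1 : Ct1 = ((fun s => s.image (Sym2.map Sum.inl)) '' Ct) ∪
      ({ {s(Sum.inr 0, Sum.inl b), s(Sum.inl b, Sum.inl c), s(Sum.inl c, Sum.inr 0)},
         {s(Sum.inr 1, Sum.inl a), s(Sum.inl a, Sum.inl c), s(Sum.inl c, Sum.inr 1)},
         {s(Sum.inr 2, Sum.inl a), s(Sum.inl a, Sum.inl b), s(Sum.inl b, Sum.inr 2)},
         {s(Sum.inr 0, Sum.inr 1), s(Sum.inr 1, Sum.inl c), s(Sum.inl c, Sum.inr 0)},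
         {s(Sum.inr 1, Sum.inr 2), s(Sum.inr 2, Sum.inl a), s(Sum.inl a, Sum.inr 1)},
         {s(Sum.inr 0, Sum.inr 2), s(Sum.inr 2, Sum.inl b), s(Sum.inl b, Sum.inr 0)} } :
        Set (Finset (Sym2 (V ⊕ Fin 3)))))
    (harb : Arboreal Gt Ct) :
    (∀ P : SimpleGraph (V ⊕ Fin 3), IsSpanningTree Gt1 P →
      (¬ ∃ s ∈ Ct1, IsFundamentalCycle Gt1 P s) →
      -- the edges of `P` not belonging to `Gt` form a path of length `3`
      -- passing through the three new vertices:
      (∃ (u w : V ⊕ Fin 3) (p : Gt1.Walk u w), p.IsPath ∧ p.length = 3 ∧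
        {e | e ∈ p.edges} =
          P.edgeSet \ ((Sym2.map Sum.inl) '' Gt.edgeSet) ∧
        ∀ i : Fin 3, Sum.inr i ∈ p.support) ∧
      -- deleting the three new vertices yields a spanning tree of `Gt`
      -- none of whose fundamental cycles lies in `Ct`:
      IsSpanningTree Gt (P.comap Sum.inl) ∧
      ¬ ∃ s ∈ Ct, IsFundamentalCycle Gt (P.comap Sum.inl) s) ∧
    Arboreal Gt1 Ct1 := by
  have key : ∀ P : SimpleGraph (V ⊕ Fin 3), IsSpanningTree Gt1 P →
      ∃ s ∈ Ct1, IsFundamentalCycle Gt1 P s := by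
    intro P hsp
    by_contra hno
    classical
    haveI : Nonempty V := ⟨a⟩
    have hPle : P ≤ Gt1 := hsp.1
    have hconn : P.Connected := hsp.2.1
    have hacyc : P.IsAcyclic := hsp.2.2
    -- Gt1 adjacencies
    have gxy : Gt1.Adj (Sum.inr 0) (Sum.inr 1) := (hadjNew 0 1).mpr (by decide)
    have gxz : Gt1.Adj (Sum.inr 0) (Sum.inr 2) := (hadjNew 0 2).mpr (by decide)
    have gyz : Gt1.Adj (Sum.inr 1) (Sum.inr 2) := (hadjNew 1 2).mpr (by decide)
    have gxb : Gt1.Adj (Sum.inr 0) (Sum.inl b) := (hadjX b).mpr (Or.inl rfl)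
    have gxc : Gt1.Adj (Sum.inr 0) (Sum.inl c) := (hadjX c).mpr (Or.inr rfl)
    have gya : Gt1.Adj (Sum.inr 1) (Sum.inl a) := (hadjY a).mpr (Or.inl rfl)
    have gyc : Gt1.Adj (Sum.inr 1) (Sum.inl c) := (hadjY c).mpr (Or.inr rfl)
    have gza : Gt1.Adj (Sum.inr 2) (Sum.inl a) := (hadjZ a).mpr (Or.inl rfl)
    have gzb : Gt1.Adj (Sum.inr 2) (Sum.inl b) := (hadjZ b).mpr (Or.inr rfl)
    have gab : Gt1.Adj (Sum.inl a) (Sum.inl b) := (hadjV a b).mpr houter.1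
    have gbc : Gt1.Adj (Sum.inl b) (Sum.inl c) := (hadjV b c).mpr houter.2.1
    have gac : Gt1.Adj (Sum.inl a) (Sum.inl c) := (hadjV a c).mpr houter.2.2
    -- rotation of triangle finsets
    have rot : ∀ (A B C : Sym2 (V ⊕ Fin 3)), ({B, C, A} : Finset (Sym2 (V ⊕ Fin 3))) = {A, B, C} := by
      intro A B C
      ext e
      simp only [Finset.mem_insert, Finset.mem_singleton]
      tauto
    -- if two edges of a triangle of Ct1 are in P and the third is a non-edge of P,
    -- we get a fundamental cycle, contradiction
    have mk : ∀ (u v w : V ⊕ Fin 3), Gt1.Adj w u →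
        P.Adj u v → P.Adj v w → ¬ P.Adj w u →
        ({s(u,v), s(v,w), s(w,u)} : Finset (Sym2 (V ⊕ Fin 3))) ∈ Ct1 → False := by
      intro u v w hg3 hp1 hp2 hp3 hmem
      refine hno ⟨_, hmem, s(w,u), Gt1.mem_edgeSet.mpr hg3,
        fun hc => hp3 (P.mem_edgeSet.mp hc), ?_⟩
      refine triWalk ?_ ?_ ?_
      · exact (SimpleGraph.sup_adj _ _ _ _).mpr (Or.inl hp1)
      · exact (SimpleGraph.sup_adj _ _ _ _).mpr (Or.inl hp2)
      · refine (SimpleGraph.sup_adj _ _ _ _).mpr (Or.inr ?_)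
        rw [SimpleGraph.fromEdgeSet_adj]
        exact ⟨by simp, hg3.ne⟩
    have no2 : ∀ u v w : V ⊕ Fin 3, Gt1.Adj u v → Gt1.Adj v w → Gt1.Adj w u →
        ({s(u,v), s(v,w), s(w,u)} : Finset (Sym2 (V ⊕ Fin 3))) ∈ Ct1 →
        ¬(P.Adj u v ∧ P.Adj v w) ∧ ¬(P.Adj v w ∧ P.Adj w u) ∧ ¬(P.Adj u v ∧ P.Adj w u) := by
      intro u v w hg1 hg2 hg3 hmem
      refine ⟨fun ⟨hp1, hp2⟩ => ?_, fun ⟨hp2, hp3⟩ => ?_, fun ⟨hp1, hp3⟩ => ?_⟩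
      · by_cases hp3 : P.Adj w u
        · obtain ⟨_, w', hc, -⟩ := triWalk hp1 hp2 hp3
          exact hacyc w' hc
        · exact mk u v w hg3 hp1 hp2 hp3 hmem
      · by_cases hp1 : P.Adj u v
        · obtain ⟨_, w', hc, -⟩ := triWalk hp1 hp2 hp3
          exact hacyc w' hc
        · exact mk v w u hg1 hp2 hp3 hp1 (by rw [rot]; exact hmem)
      · by_cases hp2 : P.Adj v w
        · obtain ⟨_, w', hc, -⟩ := triWalk hp1 hp2 hp3
          exact hacyc w' hc
        · exact mk w u v hg2 hp3 hp1 hp2 (by rw [rot, rot]; exact hmem)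
    -- the six triangles of Ct1
    have mem1 : ({s(Sum.inr 0, Sum.inl b), s(Sum.inl b, Sum.inl c), s(Sum.inl c, Sum.inr 0)} :
        Finset (Sym2 (V ⊕ Fin 3))) ∈ Ct1 := by rw [hCt1]; right; simp
    have mem2 : ({s(Sum.inr 1, Sum.inl a), s(Sum.inl a, Sum.inl c), s(Sum.inl c, Sum.inr 1)} :
        Finset (Sym2 (V ⊕ Fin 3))) ∈ Ct1 := by rw [hCt1]; right; simp
    have mem3 : ({s(Sum.inr 2, Sum.inl a), s(Sum.inl a, Sum.inl b), s(Sum.inl b, Sum.inr 2)} :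
        Finset (Sym2 (V ⊕ Fin 3))) ∈ Ct1 := by rw [hCt1]; right; simp
    have mem4 : ({s(Sum.inr 0, Sum.inr 1), s(Sum.inr 1, Sum.inl c), s(Sum.inl c, Sum.inr 0)} :
        Finset (Sym2 (V ⊕ Fin 3))) ∈ Ct1 := by rw [hCt1]; right; simp
    have mem5 : ({s(Sum.inr 1, Sum.inr 2), s(Sum.inr 2, Sum.inl a), s(Sum.inl a, Sum.inr 1)} :
        Finset (Sym2 (V ⊕ Fin 3))) ∈ Ct1 := by rw [hCt1]; right; simp
    have mem6 : ({s(Sum.inr 0, Sum.inr 2), s(Sum.inr 2, Sum.inl b), s(Sum.inl b, Sum.inr 0)} :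
        Finset (Sym2 (V ⊕ Fin 3))) ∈ Ct1 := by rw [hCt1]; right; simp
    obtain ⟨nA1, nA2, nA3⟩ := no2 (Sum.inr 0) (Sum.inr 1) (Sum.inl c) gxy gyc gxc.symm mem4
    obtain ⟨nB1, nB2, nB3⟩ := no2 (Sum.inr 0) (Sum.inr 2) (Sum.inl b) gxz gzb gxb.symm mem6
    obtain ⟨nC1, nC2, nC3⟩ := no2 (Sum.inr 1) (Sum.inr 2) (Sum.inl a) gyz gza gya.symm mem5
    obtain ⟨-, -, nD⟩ := no2 (Sum.inr 0) (Sum.inl b) (Sum.inl c) gxb gbc gxc.symm mem1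
    obtain ⟨-, -, nE⟩ := no2 (Sum.inr 1) (Sum.inl a) (Sum.inl c) gya gac gyc.symm mem2
    obtain ⟨-, -, nF⟩ := no2 (Sum.inr 2) (Sum.inl a) (Sum.inl b) gza gab gzb.symm mem3
    -- the pair facts in atom orientation
    have A1 : ¬(P.Adj (Sum.inr 0) (Sum.inr 1) ∧ P.Adj (Sum.inr 1) (Sum.inl c)) := nA1
    have A2 : ¬(P.Adj (Sum.inr 0) (Sum.inr 1) ∧ P.Adj (Sum.inr 0) (Sum.inl c)) :=
      fun ⟨h1, h2⟩ => nA3 ⟨h1, h2.symm⟩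
    have A3 : ¬(P.Adj (Sum.inr 1) (Sum.inl c) ∧ P.Adj (Sum.inr 0) (Sum.inl c)) :=
      fun ⟨h1, h2⟩ => nA2 ⟨h1, h2.symm⟩
    have B1 : ¬(P.Adj (Sum.inr 0) (Sum.inr 2) ∧ P.Adj (Sum.inr 2) (Sum.inl b)) := nB1
    have B2 : ¬(P.Adj (Sum.inr 0) (Sum.inr 2) ∧ P.Adj (Sum.inr 0) (Sum.inl b)) :=
      fun ⟨h1, h2⟩ => nB3 ⟨h1, h2.symm⟩
    have B3 : ¬(P.Adj (Sum.inr 2) (Sum.inl b) ∧ P.Adj (Sum.inr 0) (Sum.inl b)) :=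
      fun ⟨h1, h2⟩ => nB2 ⟨h1, h2.symm⟩
    have C1 : ¬(P.Adj (Sum.inr 1) (Sum.inr 2) ∧ P.Adj (Sum.inr 2) (Sum.inl a)) := nC1
    have C2 : ¬(P.Adj (Sum.inr 1) (Sum.inr 2) ∧ P.Adj (Sum.inr 1) (Sum.inl a)) :=
      fun ⟨h1, h2⟩ => nC3 ⟨h1, h2.symm⟩
    have C3 : ¬(P.Adj (Sum.inr 2) (Sum.inl a) ∧ P.Adj (Sum.inr 1) (Sum.inl a)) :=
      fun ⟨h1, h2⟩ => nC2 ⟨h1, h2.symm⟩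
    have D : ¬(P.Adj (Sum.inr 0) (Sum.inl b) ∧ P.Adj (Sum.inr 0) (Sum.inl c)) :=
      fun ⟨h1, h2⟩ => nD ⟨h1, h2.symm⟩
    have E : ¬(P.Adj (Sum.inr 1) (Sum.inl a) ∧ P.Adj (Sum.inr 1) (Sum.inl c)) :=
      fun ⟨h1, h2⟩ => nE ⟨h1, h2.symm⟩
    have F : ¬(P.Adj (Sum.inr 2) (Sum.inl a) ∧ P.Adj (Sum.inr 2) (Sum.inl b)) :=
      fun ⟨h1, h2⟩ => nF ⟨h1, h2.symm⟩
    have Gf : ¬(P.Adj (Sum.inr 0) (Sum.inr 1) ∧ P.Adj (Sum.inr 1) (Sum.inr 2) ∧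
        P.Adj (Sum.inr 0) (Sum.inr 2)) := by
      rintro ⟨h1, h2, h3⟩
      obtain ⟨_, w', hc, -⟩ := triWalk h1 h2 h3.symm
      exact hacyc w' hc
    -- neighbour classification
    have nbrx : ∀ w, P.Adj (Sum.inr 0) w →
        w = Sum.inr 1 ∨ w = Sum.inr 2 ∨ w = Sum.inl b ∨ w = Sum.inl c := by
      intro w hw
      have hg := hPle hw
      rcases w with v' | j
      · rcases (hadjX v').mp hg with rfl | rfl
        · right; right; left; rfl
        · right; right; right; rfl
      · have hj := (hadjNew 0 j).mp hg
        fin_cases j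
        · exact absurd rfl hj
        · left; rfl
        · right; left; rfl
    have nbry : ∀ w, P.Adj (Sum.inr 1) w →
        w = Sum.inr 0 ∨ w = Sum.inr 2 ∨ w = Sum.inl a ∨ w = Sum.inl c := by
      intro w hw
      have hg := hPle hw
      rcases w with v' | j
      · rcases (hadjY v').mp hg with rfl | rfl
        · right; right; left; rfl
        · right; right; right; rfl
      · have hj := (hadjNew 1 j).mp hg
        fin_cases j
        · left; rfl
        · exact absurd rfl hj
        · right; left; rfl
    have nbrz : ∀ w, P.Adj (Sum.inr 2) w →
        w = Sum.inr 0 ∨ w = Sum.inr 1 ∨ w = Sum.inl a ∨ w = Sum.inl b := by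
      intro w hw
      have hg := hPle hw
      rcases w with v' | j
      · rcases (hadjZ v').mp hg with rfl | rfl
        · right; right; left; rfl
        · right; right; right; rfl
      · have hj := (hadjNew 2 j).mp hg
        fin_cases j
        · left; rfl
        · right; left; rfl
        · exact absurd rfl hj
    have getnbr : ∀ i : Fin 3, ∃ w, P.Adj (Sum.inr i) w := by
      intro i
      obtain ⟨p⟩ := hconn.preconnected (Sum.inr i) (Sum.inl a)
      obtain ⟨w, h, -, -⟩ := p.exists_eq_cons_of_ne (by simp)
      exact ⟨w, h⟩
    have degx : P.Adj (Sum.inr 0) (Sum.inr 1) ∨ P.Adj (Sum.inr 0) (Sum.inr 2) ∨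
        P.Adj (Sum.inr 0) (Sum.inl b) ∨ P.Adj (Sum.inr 0) (Sum.inl c) := by
      obtain ⟨w, hw⟩ := getnbr 0
      rcases nbrx w hw with rfl | rfl | rfl | rfl
      · exact Or.inl hw
      · exact Or.inr (Or.inl hw)
      · exact Or.inr (Or.inr (Or.inl hw))
      · exact Or.inr (Or.inr (Or.inr hw))
    have degy : P.Adj (Sum.inr 0) (Sum.inr 1) ∨ P.Adj (Sum.inr 1) (Sum.inr 2) ∨
        P.Adj (Sum.inr 1) (Sum.inl a) ∨ P.Adj (Sum.inr 1) (Sum.inl c) := by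
      obtain ⟨w, hw⟩ := getnbr 1
      rcases nbry w hw with rfl | rfl | rfl | rfl
      · exact Or.inl hw.symm
      · exact Or.inr (Or.inl hw)
      · exact Or.inr (Or.inr (Or.inl hw))
      · exact Or.inr (Or.inr (Or.inr hw))
    have degz : P.Adj (Sum.inr 0) (Sum.inr 2) ∨ P.Adj (Sum.inr 1) (Sum.inr 2) ∨
        P.Adj (Sum.inr 2) (Sum.inl a) ∨ P.Adj (Sum.inr 2) (Sum.inl b) := by
      obtain ⟨w, hw⟩ := getnbr 2
      rcases nbrz w hw with rfl | rfl | rfl | rfl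
      · exact Or.inl hw.symm
      · exact Or.inr (Or.inl hw.symm)
      · exact Or.inr (Or.inr (Or.inl hw))
      · exact Or.inr (Or.inr (Or.inr hw))
    -- the restriction of P to V
    set P' : SimpleGraph V := P.comap Sum.inl with hP'def
    have hPadj' : ∀ u v : V, P'.Adj u v ↔ P.Adj (Sum.inl u) (Sum.inl v) := fun _ _ => Iff.rfl
    have hle' : P' ≤ Gt := fun {u v} h => (hadjV u v).mp (hPle h)
    have hacyc' : P'.IsAcyclic := by
      intro v cyc hc
      have hinj : Function.Injective (Sum.inl : V → V ⊕ Fin 3) := Sum.inl_injective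
      let f : P' →g P := ⟨Sum.inl, fun h => h⟩
      exact hacyc (cyc.map f) (hc.map hinj)
    have transfer : ∀ (s t : V ⊕ Fin 3) (w : P.Walk s t),
        (∀ r ∈ w.support, ∃ r', r = Sum.inl r') → ∀ us vs, s = Sum.inl us → t = Sum.inl vs →
        P'.Reachable us vs := by
      intro s t w
      induction w with
      | nil =>
        intro _ us vs h1 h2
        subst h1
        obtain rfl := Sum.inl_injective h2
        exact SimpleGraph.Reachable.refl _
      | @cons s' m t' hadj p ih =>
        intro hsup us vs h1 h2
        subst h1
        obtain ⟨m', rfl⟩ := hsup m (by simp)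
        refine SimpleGraph.Reachable.trans ?_ (ih (fun r hr => hsup r (by simp [hr])) m' vs rfl h2)
        exact SimpleGraph.Adj.reachable hadj
    have hconn' : P'.Connected := by
      refine SimpleGraph.Connected.mk ?_
      intro u v
      obtain ⟨w0⟩ := hconn.preconnected (Sum.inl u) (Sum.inl v)
      let pp := w0.toPath
      rcases Classical.em (∀ r ∈ pp.1.support,
          ∃ r', r = Sum.inl r') with hall | hall
      · exact transfer _ _ pp.1 hall u v rfl rfl
      · exfalso
        push_neg at hall
        obtain ⟨t, ht, htn⟩ := hall
        -- derive the support hypotheses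
        have Hgen : ∀ i : Fin 3, (∀ w, P.Adj (Sum.inr i) w →
            w = Sum.inr 0 ∨ w = Sum.inr 1 ∨ w = Sum.inr 2 ∨ w = Sum.inl a ∨ w = Sum.inl b ∨ w = Sum.inl c) →
            True := fun _ _ => trivial
        have hne : ∀ i : Fin 3, (Sum.inr i : V ⊕ Fin 3) ≠ Sum.inl u := by simp
        have hne' : ∀ i : Fin 3, (Sum.inr i : V ⊕ Fin 3) ≠ Sum.inl v := by simp
        have Hx : Sum.inr 0 ∈ pp.1.support →
            (P.Adj (Sum.inr 0) (Sum.inr 1) ∧ P.Adj (Sum.inr 0) (Sum.inr 2) ∧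
              Sum.inr 1 ∈ pp.1.support ∧ Sum.inr 2 ∈ pp.1.support) ∨
            (P.Adj (Sum.inr 0) (Sum.inr 1) ∧ P.Adj (Sum.inr 0) (Sum.inl b) ∧
              Sum.inr 1 ∈ pp.1.support) ∨
            (P.Adj (Sum.inr 0) (Sum.inr 2) ∧ P.Adj (Sum.inr 0) (Sum.inl c) ∧
              Sum.inr 2 ∈ pp.1.support) := by
          intro hs
          obtain ⟨w1, w2, hw12, ha1, ha2, hm1, hm2⟩ :=
            internal_two_nbrs pp.1 pp.2 hs (hne 0) (hne' 0)
          rcases nbrx w1 ha1 with rfl | rfl | rfl | rfl <;>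
            rcases nbrx w2 ha2 with rfl | rfl | rfl | rfl
          · exact absurd rfl hw12
          · exact Or.inl ⟨ha1, ha2, hm1, hm2⟩
          · exact Or.inr (Or.inl ⟨ha1, ha2, hm1⟩)
          · exact absurd ⟨ha1, ha2⟩ A2
          · exact Or.inl ⟨ha2, ha1, hm2, hm1⟩
          · exact absurd rfl hw12
          · exact absurd ⟨ha1, ha2⟩ B2
          · exact Or.inr (Or.inr ⟨ha1, ha2, hm1⟩)
          · exact Or.inr (Or.inl ⟨ha2, ha1, hm2⟩)
          · exact absurd ⟨ha2, ha1⟩ B2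
          · exact absurd rfl hw12
          · exact absurd ⟨ha1, ha2⟩ D
          · exact absurd ⟨ha2, ha1⟩ A2
          · exact Or.inr (Or.inr ⟨ha2, ha1, hm2⟩)
          · exact absurd ⟨ha2, ha1⟩ D
          · exact absurd rfl hw12
        have Hy : Sum.inr 1 ∈ pp.1.support →
            (P.Adj (Sum.inr 0) (Sum.inr 1) ∧ P.Adj (Sum.inr 1) (Sum.inr 2) ∧
              Sum.inr 0 ∈ pp.1.support ∧ Sum.inr 2 ∈ pp.1.support) ∨
            (P.Adj (Sum.inr 0) (Sum.inr 1) ∧ P.Adj (Sum.inr 1) (Sum.inl a) ∧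
              Sum.inr 0 ∈ pp.1.support) ∨
            (P.Adj (Sum.inr 1) (Sum.inr 2) ∧ P.Adj (Sum.inr 1) (Sum.inl c) ∧
              Sum.inr 2 ∈ pp.1.support) := by
          intro hs
          obtain ⟨w1, w2, hw12, ha1, ha2, hm1, hm2⟩ :=
            internal_two_nbrs pp.1 pp.2 hs (hne 1) (hne' 1)
          rcases nbry w1 ha1 with rfl | rfl | rfl | rfl <;>
            rcases nbry w2 ha2 with rfl | rfl | rfl | rfl
          · exact absurd rfl hw12
          · exact Or.inl ⟨ha1.symm, ha2, hm1, hm2⟩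
          · exact Or.inr (Or.inl ⟨ha1.symm, ha2, hm1⟩)
          · exact absurd ⟨ha1.symm, ha2⟩ A1
          · exact Or.inl ⟨ha2.symm, ha1, hm2, hm1⟩
          · exact absurd rfl hw12
          · exact absurd ⟨ha1, ha2⟩ C2
          · exact Or.inr (Or.inr ⟨ha1, ha2, hm1⟩)
          · exact Or.inr (Or.inl ⟨ha2.symm, ha1, hm2⟩)
          · exact absurd ⟨ha2, ha1⟩ C2
          · exact absurd rfl hw12
          · exact absurd ⟨ha1, ha2⟩ E
          · exact absurd ⟨ha2.symm, ha1⟩ A1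
          · exact Or.inr (Or.inr ⟨ha2, ha1, hm2⟩)
          · exact absurd ⟨ha2, ha1⟩ E
          · exact absurd rfl hw12
        have Hz : Sum.inr 2 ∈ pp.1.support →
            (P.Adj (Sum.inr 0) (Sum.inr 2) ∧ P.Adj (Sum.inr 1) (Sum.inr 2) ∧
              Sum.inr 0 ∈ pp.1.support ∧ Sum.inr 1 ∈ pp.1.support) ∨
            (P.Adj (Sum.inr 0) (Sum.inr 2) ∧ P.Adj (Sum.inr 2) (Sum.inl a) ∧
              Sum.inr 0 ∈ pp.1.support) ∨
            (P.Adj (Sum.inr 1) (Sum.inr 2) ∧ P.Adj (Sum.inr 2) (Sum.inl b) ∧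
              Sum.inr 1 ∈ pp.1.support) := by
          intro hs
          obtain ⟨w1, w2, hw12, ha1, ha2, hm1, hm2⟩ :=
            internal_two_nbrs pp.1 pp.2 hs (hne 2) (hne' 2)
          rcases nbrz w1 ha1 with rfl | rfl | rfl | rfl <;>
            rcases nbrz w2 ha2 with rfl | rfl | rfl | rfl
          · exact absurd rfl hw12
          · exact Or.inl ⟨ha1.symm, ha2.symm, hm1, hm2⟩
          · exact Or.inr (Or.inl ⟨ha1.symm, ha2, hm1⟩)
          · exact absurd ⟨ha1.symm, ha2⟩ B1
          · exact Or.inl ⟨ha2.symm, ha1.symm, hm2, hm1⟩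
          · exact absurd rfl hw12
          · exact absurd ⟨ha1.symm, ha2⟩ C1
          · exact Or.inr (Or.inr ⟨ha1.symm, ha2, hm1⟩)
          · exact Or.inr (Or.inl ⟨ha2.symm, ha1, hm2⟩)
          · exact absurd ⟨ha2.symm, ha1⟩ C1
          · exact absurd rfl hw12
          · exact absurd ⟨ha1, ha2⟩ F
          · exact absurd ⟨ha2.symm, ha1⟩ B1
          · exact Or.inr (Or.inr ⟨ha2.symm, ha1, hm2⟩)
          · exact absurd ⟨ha2, ha1⟩ F
          · exact absurd rfl hw12
        have hS : Sum.inr 0 ∈ pp.1.support ∨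
            Sum.inr 1 ∈ pp.1.support ∨
            Sum.inr 2 ∈ pp.1.support := by
          rcases t with v' | i
          · exact absurd rfl (htn v')
          · fin_cases i
            · exact Or.inl ht
            · exact Or.inr (Or.inl ht)
            · exact Or.inr (Or.inr ht)
        exact octaProp _ _ _ _ _ _ _ _ _ _ _ _
          A1 A2 A3 B1 B2 B3 C1 C2 C3 Gf degx degy degz Hx Hy Hz hS
    have hsp' : IsSpanningTree Gt P' := ⟨hle', ⟨hconn', hacyc'⟩⟩
    -- use arboreality of Ct
    obtain ⟨σ, hσC, e, heG, heP, u0, w0, hc0, hs0⟩ := harb P' hsp'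
    -- map everything to Gt1
    induction e using Sym2.ind with
    | _ u1 v1 =>
    have hadj1 : Gt.Adj u1 v1 := Gt.mem_edgeSet.mp heG
    have heG' : s(Sum.inl u1, Sum.inl v1) ∈ Gt1.edgeSet :=
      Gt1.mem_edgeSet.mpr ((hadjV u1 v1).mpr hadj1)
    have heP' : s(Sum.inl u1, Sum.inl v1) ∉ P.edgeSet := by
      intro hc
      exact heP (P'.mem_edgeSet.mpr (P.mem_edgeSet.mp hc))
    have hinj : Function.Injective (Sum.inl : V → V ⊕ Fin 3) := Sum.inl_injective
    let f : (P' ⊔ SimpleGraph.fromEdgeSet {s(u1, v1)}) →g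
        (P ⊔ SimpleGraph.fromEdgeSet {s(Sum.inl u1, Sum.inl v1)}) := by
      refine ⟨Sum.inl, ?_⟩
      rintro p q hpq
      rcases (SimpleGraph.sup_adj _ _ _ _).mp hpq with h | h
      · exact (SimpleGraph.sup_adj _ _ _ _).mpr (Or.inl h)
      · rw [SimpleGraph.fromEdgeSet_adj] at h
        refine (SimpleGraph.sup_adj _ _ _ _).mpr (Or.inr ?_)
        rw [SimpleGraph.fromEdgeSet_adj]
        constructor
        · have h1 := h.1
          simp only [Set.mem_singleton_iff] at h1 ⊢
          rw [← Sym2.map_pair_eq Sum.inl, h1, Sym2.map_pair_eq]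
        · simp [h.2]
    refine hno ⟨σ.image (Sym2.map Sum.inl), ?_, s(Sum.inl u1, Sum.inl v1), heG', heP',
        Sum.inl u0, w0.map f, hc0.map (by exact hinj), ?_⟩
    · rw [hCt1]
      exact Or.inl ⟨σ, hσC, rfl⟩
    · rw [SimpleGraph.Walk.edges_map, ← hs0]
      ext e'; simp; exact Iff.rfl
  constructor
  · intro P hP hno
    exact absurd (key P hP) hno
  · exact key
end
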